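/- Let J : ℕ → ℝ be positive and strictly decreasing, N ≥ 1, k ∈ {0,...,N}, and σ a configuration with exactly k plus spins. Then equality ∑_{i,j} J(|i-j|) 𝟙[σ_i ≠ σ_j] = 2 ∑_{i=1}^k ∑_{j=k+1}^N J(|i-j|) holds if and only if σ = L^(k) or σ = R^(k). -/

import Mathlib

open Finset

/-- Long-range Ising Hamiltonian with free boundary conditions on {0,...,N-1}:
`H(σ) = -∑_{i<j} J(|i-j|) σᵢ σⱼ - h ∑ᵢ σᵢ`. -/
noncomputable def H (N : ℕ) (J : ℕ → ℝ) (h : ℝ) (σ : Fin N → ℝ) : ℝ :=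
  -(∑ i : Fin N, ∑ j : Fin N,
      if (i : ℕ) < (j : ℕ) then J (Nat.dist (i : ℕ) (j : ℕ)) * σ i * σ j else 0)
    - h * ∑ i : Fin N, σ i

/-- A spin configuration takes values in {-1, +1}. -/
def IsConfig {N : ℕ} (σ : Fin N → ℝ) : Prop := ∀ i, σ i = 1 ∨ σ i = -1

/-- The configuration `L^(k)`: +1 on the first k sites, -1 elsewhere. -/
def Lconf (N k : ℕ) : Fin N → ℝ := fun i => if (i : ℕ) < k then 1 else -1

/-- The configuration `R^(k)`: +1 on the last k sites, -1 elsewhere. -/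
def Rconf (N k : ℕ) : Fin N → ℝ := fun i => if N - k ≤ (i : ℕ) then 1 else -1

namespace Prop41


/-- number of disagreeing pairs at distance `e` for plus-set `A` in `[0,N)`. -/
def cc (A : Finset ℕ) (N e : ℕ) : ℕ :=
  ∑ i ∈ range (N - e), if ¬ (i ∈ A ↔ i + e ∈ A) then 1 else 0

/-- cumulative count of disagreeing pairs at distance `≤ d`. -/
def CC (A : Finset ℕ) (N d : ℕ) : ℕ := ∑ e ∈ Icc 1 d, cc A N e

lemma cc_congr {A B : Finset ℕ} {N : ℕ} (h : ∀ x, x < N → (x ∈ A ↔ x ∈ B)) (e : ℕ) :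
    cc A N e = cc B N e := by
  unfold cc
  refine Finset.sum_congr rfl fun i hi => ?_
  rw [mem_range] at hi
  exact if_congr (by rw [h i (by omega), h (i+e) (by omega)]) rfl rfl

lemma CC_congr {A B : Finset ℕ} {N : ℕ} (h : ∀ x, x < N → (x ∈ A ↔ x ∈ B)) (d : ℕ) :
    CC A N d = CC B N d :=
  Finset.sum_congr rfl fun e _ => cc_congr h e

lemma cc_succ (A : Finset ℕ) (N e : ℕ) (he : 1 ≤ e) :
    cc A (N+1) e = cc A N e + if e ≤ N ∧ ¬ (N - e ∈ A ↔ N ∈ A) then 1 else 0 := by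
  unfold cc
  rcases le_or_gt e N with h | h
  · have h1 : N + 1 - e = (N - e) + 1 := by omega
    rw [h1, Finset.sum_range_succ]
    congr 1
    have h2 : N - e + e = N := by omega
    rw [h2]
    exact (if_congr (by simp [h]) rfl rfl)
  · have h1 : N + 1 - e = 0 := by omega
    have h2 : N - e = 0 := by omega
    rw [h1, h2]
    simp [show ¬ (e ≤ N) from by omega]

lemma cc_range_shift (k N e : ℕ) (he : 1 ≤ e) :
    cc (range (k+1)) (N+1) e = cc (range k) N e + if e ≤ N ∧ k + 1 ≤ e then 1 else 0 := by
  unfold cc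
  rcases le_or_gt e N with h | h
  · have h1 : N + 1 - e = (N - e) + 1 := by omega
    rw [h1, Finset.sum_range_succ']
    congr 1
    · refine Finset.sum_congr rfl fun i hi => ?_
      refine if_congr ?_ rfl rfl
      simp only [mem_range]
      omega
    · simp only [mem_range]
      refine if_congr ?_ rfl rfl
      omega
  · have h1 : N + 1 - e = 0 := by omega
    have h2 : N - e = 0 := by omega
    rw [h1, h2]
    simp [show ¬ (e ≤ N) from by omega]

lemma CC_succ (A : Finset ℕ) (N d : ℕ) :
    CC A (N+1) d = CC A N d
      + ((Icc 1 d).filter fun e => e ≤ N ∧ ¬ (N - e ∈ A ↔ N ∈ A)).card := by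
  unfold CC
  rw [Finset.card_filter, ← Finset.sum_add_distrib]
  refine Finset.sum_congr rfl fun e he => ?_
  rw [mem_Icc] at he
  exact cc_succ A N e he.1

lemma CC_range_shift (k N d : ℕ) :
    CC (range (k+1)) (N+1) d = CC (range k) N d
      + ((Icc 1 d).filter fun e => e ≤ N ∧ k + 1 ≤ e).card := by
  unfold CC
  rw [Finset.card_filter, ← Finset.sum_add_distrib]
  refine Finset.sum_congr rfl fun e he => ?_
  rw [mem_Icc] at he
  exact cc_range_shift k N e he.1

lemma filter_Icc_card (d N a : ℕ) (ha : 1 ≤ a) :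
    ((Icc 1 d).filter fun e => e ≤ N ∧ a ≤ e).card = min d N + 1 - a := by
  have h : ((Icc 1 d).filter fun e => e ≤ N ∧ a ≤ e) = Icc a (min d N) := by
    ext e
    simp only [mem_filter, mem_Icc]
    omega
  rw [h, Nat.card_Icc]

lemma boundary_count_mem (A : Finset ℕ) (N d k : ℕ) (hNA : N ∈ A)
    (hcard : A.card = k + 1) :
    min d N - k ≤ ((Icc 1 d).filter fun e => e ≤ N ∧ ¬ (N - e ∈ A ↔ N ∈ A)).card := by
  classical
  set E := (Icc 1 d).filter (fun e => e ≤ N) with hE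
  have hEcard : E.card = min d N := by
    have h : E = Icc 1 (min d N) := by
      ext e; simp only [hE, mem_filter, mem_Icc]; omega
    rw [h, Nat.card_Icc]; omega
  have hsplit := Finset.card_filter_add_card_filter_not
    (s := E) (p := fun e => N - e ∈ A)
  have hle : (E.filter fun e => N - e ∈ A).card ≤ k := by
    have hk : (A.erase N).card = k := by rw [card_erase_of_mem hNA, hcard]; omega
    rw [← hk]
    apply Finset.card_le_card_of_injOn (fun e => N - e)
    · intro e hee
      simp only [hE, mem_coe, mem_filter, mem_Icc] at hee
      rw [mem_coe, mem_erase]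
      exact ⟨by beta_reduce; omega, hee.2⟩
    · intro e1 h1 e2 h2 hne
      simp only [hE, coe_filter, Set.mem_setOf_eq, mem_filter, mem_Icc] at h1 h2
      change N - e1 = N - e2 at hne
      omega
  have hgoal : ((Icc 1 d).filter fun e => e ≤ N ∧ ¬ (N - e ∈ A ↔ N ∈ A))
      = E.filter (fun e => ¬ (N - e ∈ A)) := by
    ext e
    simp only [hE, mem_filter, mem_Icc, hNA, iff_true, and_assoc]
  rw [hgoal]
  omega

lemma boundary_count_not_mem (A : Finset ℕ) (N d k : ℕ) (hsub : A ⊆ range N)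
    (hNA : N ∉ A) (hcard : A.card = k) :
    min d N - (N - k) ≤ ((Icc 1 d).filter fun e => e ≤ N ∧ ¬ (N - e ∈ A ↔ N ∈ A)).card := by
  classical
  set E := (Icc 1 d).filter (fun e => e ≤ N) with hE
  have hEcard : E.card = min d N := by
    have h : E = Icc 1 (min d N) := by
      ext e; simp only [hE, mem_filter, mem_Icc]; omega
    rw [h, Nat.card_Icc]; omega
  have hsplit := Finset.card_filter_add_card_filter_not
    (s := E) (p := fun e => N - e ∈ A)
  have hle : (E.filter fun e => ¬ (N - e ∈ A)).card ≤ N - k := by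
    have hc : (range N \ A).card = N - k := by
      rw [card_sdiff_of_subset hsub, card_range, hcard]
    rw [← hc]
    apply Finset.card_le_card_of_injOn (fun e => N - e)
    · intro e hee
      simp only [hE, mem_coe, mem_filter, mem_Icc] at hee
      rw [mem_coe, mem_sdiff, mem_range]
      exact ⟨by beta_reduce; omega, hee.2⟩
    · intro e1 h1 e2 h2 hne
      simp only [hE, coe_filter, Set.mem_setOf_eq, mem_filter, mem_Icc] at h1 h2
      change N - e1 = N - e2 at hne
      omega
  have hgoal : ((Icc 1 d).filter fun e => e ≤ N ∧ ¬ (N - e ∈ A ↔ N ∈ A))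
      = E.filter (fun e => N - e ∈ A) := by
    ext e
    simp only [hE, mem_filter, mem_Icc, hNA, iff_false, not_not, and_assoc]
  rw [hgoal]
  omega

lemma key : ∀ (N : ℕ) (A : Finset ℕ) (k d : ℕ), A ⊆ range N → A.card = k →
    CC (range k) N d ≤ CC A N d := by
  intro N
  induction N with
  | zero =>
    intro A k d hsub hcard
    have hA : A = ∅ := by
      rw [← Finset.subset_empty]
      simpa using hsub
    subst hA
    simp only [card_empty] at hcard
    subst hcard
    simp [CC, cc]
  | succ N ih =>
    intro A k d hsub hcard
    have hkN1 : k ≤ N + 1 := by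
      rw [← hcard, ← Finset.card_range (N+1)]
      exact card_le_card hsub
    rcases eq_or_lt_of_le hkN1 with hkN | hkN
    · have hA : A = range (N+1) :=
        Finset.eq_of_subset_of_card_le hsub (by rw [card_range, hcard, hkN])
      rw [hA, hkN]
    · have hk_le : k ≤ N := by omega
      by_cases hNA : N ∈ A
      · obtain ⟨k', rfl⟩ : ∃ k', k = k' + 1 := by
          have : 0 < k := by rw [← hcard]; exact card_pos.mpr ⟨N, hNA⟩
          exact ⟨k - 1, by omega⟩
        set A' := A.erase N with hA'
        have hsub' : A' ⊆ range N := by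
          intro x hx
          have hxA := mem_of_mem_erase hx
          have h1 := hsub hxA
          rw [mem_range] at h1 ⊢
          have h2 : x ≠ N := ne_of_mem_erase hx
          omega
        have hcard' : A'.card = k' := by
          rw [hA', card_erase_of_mem hNA, hcard]; omega
        have IH := ih A' k' d hsub' hcard'
        have e1 : CC A (N+1) d = CC A' N d
            + ((Icc 1 d).filter fun e => e ≤ N ∧ ¬ (N - e ∈ A ↔ N ∈ A)).card := by
          rw [CC_succ]
          congr 1
          refine CC_congr (fun x hx => ?_) d
          rw [hA', mem_erase]
          constructor
          · intro hxA; exact ⟨by omega, hxA⟩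
          · exact fun h => h.2
        have e2 : CC (range (k'+1)) (N+1) d = CC (range k') N d + (min d N + 1 - (k'+1)) := by
          rw [CC_range_shift, filter_Icc_card d N (k'+1) (by omega)]
        have e3 := boundary_count_mem A N d k' hNA hcard
        omega
      · have hsub' : A ⊆ range N := by
          intro x hx
          have h1 := hsub hx
          rw [mem_range] at h1 ⊢
          have h2 : x ≠ N := fun h => hNA (h ▸ hx)
          omega
        have IH := ih A k d hsub' hcard
        have e1 := CC_succ A N d
        have e2 : CC (range k) (N+1) d = CC (range k) N d + (min d N + 1 - (N - k + 1)) := by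
          rw [CC_succ]
          congr 1
          rw [← filter_Icc_card d N (N-k+1) (by omega)]
          congr 1
          ext e
          simp only [mem_filter, mem_Icc, mem_range]
          omega
        have e3 := boundary_count_not_mem A N d k hsub' hNA hcard
        omega




lemma abel (J : ℕ → ℝ) (a : ℕ → ℝ) : ∀ m : ℕ, ∑ e ∈ Icc 1 (m+1), J e * a e
    = ∑ d ∈ Icc 1 m, (J d - J (d+1)) * (∑ e ∈ Icc 1 d, a e)
      + J (m+1) * ∑ e ∈ Icc 1 (m+1), a e := by
  intro m
  induction m with
  | zero => simp
  | succ m ih =>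
    have e1 : ∑ e ∈ Icc 1 (m+1+1), J e * a e
        = (∑ e ∈ Icc 1 (m+1), J e * a e) + J (m+1+1) * a (m+1+1) :=
      Finset.sum_Icc_succ_top (by omega) _
    have e2 : ∑ d ∈ Icc 1 (m+1), (J d - J (d+1)) * (∑ e ∈ Icc 1 d, a e)
        = (∑ d ∈ Icc 1 m, (J d - J (d+1)) * (∑ e ∈ Icc 1 d, a e))
          + (J (m+1) - J (m+1+1)) * (∑ e ∈ Icc 1 (m+1), a e) :=
      Finset.sum_Icc_succ_top (by omega) _
    have e3 : ∑ e ∈ Icc 1 (m+1+1), a e = (∑ e ∈ Icc 1 (m+1), a e) + a (m+1+1) :=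
      Finset.sum_Icc_succ_top (by omega) _
    rw [e1, ih, e2, e3]
    ring

lemma double_sum_sym (h : ℕ → ℕ → ℝ) (hsym : ∀ i j, h i j = h j i) (hdiag : ∀ i, h i i = 0) :
    ∀ N : ℕ, ∑ i ∈ range N, ∑ j ∈ range N, h i j = 2 * ∑ j ∈ range N, ∑ i ∈ range j, h i j := by
  intro N
  induction N with
  | zero => simp
  | succ N ih =>
    calc ∑ i ∈ range (N+1), ∑ j ∈ range (N+1), h i j
        = ∑ i ∈ range (N+1), (∑ j ∈ range N, h i j + h i N) :=
          Finset.sum_congr rfl (fun i _ => Finset.sum_range_succ _ _)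
      _ = ∑ i ∈ range (N+1), ∑ j ∈ range N, h i j + ∑ i ∈ range (N+1), h i N :=
          Finset.sum_add_distrib
      _ = ((∑ i ∈ range N, ∑ j ∈ range N, h i j) + ∑ j ∈ range N, h N j)
            + ((∑ i ∈ range N, h i N) + h N N) := by
          rw [Finset.sum_range_succ, Finset.sum_range_succ]
      _ = 2 * (∑ j ∈ range N, ∑ i ∈ range j, h i j) + 2 * ∑ i ∈ range N, h i N := by
          rw [ih, hdiag]
          have hh : ∑ j ∈ range N, h N j = ∑ i ∈ range N, h i N :=
            Finset.sum_congr rfl (fun j _ => hsym N j)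
          rw [hh]; ring
      _ = 2 * ∑ j ∈ range (N+1), ∑ i ∈ range j, h i j := by
          rw [Finset.sum_range_succ]; ring

lemma T_eq_double (N : ℕ) (J : ℕ → ℝ) (σ : Fin N → ℝ) (τ : ℕ → ℝ)
    (hτ : ∀ i : Fin N, τ i = σ i) :
    (∑ i : Fin N, ∑ j : Fin N, (if i ≠ j ∧ σ i ≠ σ j then J (Nat.dist (i:ℕ) (j:ℕ)) else 0))
      = ∑ i ∈ range N, ∑ j ∈ range N, (if i ≠ j ∧ τ i ≠ τ j then J (Nat.dist i j) else 0) := by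
  rw [← Fin.sum_univ_eq_sum_range
    (fun a => ∑ j ∈ range N, (if a ≠ j ∧ τ a ≠ τ j then J (Nat.dist a j) else 0)) N]
  refine Finset.sum_congr rfl fun i _ => ?_
  rw [← Fin.sum_univ_eq_sum_range
    (fun b => (if (i:ℕ) ≠ b ∧ τ i ≠ τ b then J (Nat.dist i b) else 0)) N]
  refine Finset.sum_congr rfl fun j _ => ?_
  refine if_congr ?_ rfl rfl
  rw [hτ i, hτ j, Fin.val_ne_iff]

lemma inner_reindex (J : ℕ → ℝ) (τ : ℕ → ℝ) (j : ℕ) :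
    ∑ i ∈ range j, (if τ i ≠ τ j then J (j - i) else 0)
      = ∑ e ∈ Icc 1 j, (if τ (j - e) ≠ τ j then J e else 0) := by
  rw [← Finset.Ico_add_one_right_eq_Icc, Finset.sum_Ico_eq_sum_range]
  have hj : j + 1 - 1 = j := by omega
  rw [hj, ← Finset.sum_range_reflect]
  refine Finset.sum_congr rfl fun i hi => ?_
  rw [mem_range] at hi
  have h1 : j - 1 - i < j := by omega
  have h2 : j - (1 + i) = j - 1 - i := by omega
  have h3 : j - (j - 1 - i) = 1 + i := by omega
  rw [h2, h3]

lemma g_eq_F (N : ℕ) (J : ℕ → ℝ) (τ : ℕ → ℝ) (A : Finset ℕ)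
    (hval : ∀ x, x < N → τ x = 1 ∨ τ x = -1)
    (hA : ∀ x, x < N → (x ∈ A ↔ τ x = 1)) :
    ∑ j ∈ range N, ∑ i ∈ range j, (if τ i ≠ τ j then J (j - i) else 0)
      = ∑ e ∈ Icc 1 (N-1), J e * (cc A N e : ℝ) := by
  have step1 : ∑ j ∈ range N, ∑ i ∈ range j, (if τ i ≠ τ j then J (j - i) else 0)
      = ∑ j ∈ range N, ∑ e ∈ Icc 1 (N-1), (if e ≤ j ∧ τ (j - e) ≠ τ j then J e else 0) := by
    refine Finset.sum_congr rfl fun j hj => ?_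
    rw [mem_range] at hj
    rw [inner_reindex]
    have h1 : ∑ e ∈ Icc 1 j, (if τ (j - e) ≠ τ j then J e else 0)
        = ∑ e ∈ Icc 1 j, (if e ≤ j ∧ τ (j - e) ≠ τ j then J e else 0) := by
      refine Finset.sum_congr rfl fun e he => ?_
      rw [mem_Icc] at he
      exact (if_congr (by simp [he.2]) rfl rfl).symm
    rw [h1]
    refine Finset.sum_subset (Finset.Icc_subset_Icc_right (by omega)) ?_
    intro e he hne
    rw [mem_Icc] at he hne
    exact if_neg (by omega)
  rw [step1, Finset.sum_comm]
  refine Finset.sum_congr rfl fun e he => ?_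
  rw [mem_Icc] at he
  have step2 : ∑ j ∈ range N, (if e ≤ j ∧ τ (j - e) ≠ τ j then J e else 0)
      = ∑ j ∈ Ico e N, (if τ (j - e) ≠ τ j then J e else 0) := by
    have h2 : ∑ j ∈ Ico e N, (if τ (j - e) ≠ τ j then J e else 0)
        = ∑ j ∈ Ico e N, (if e ≤ j ∧ τ (j - e) ≠ τ j then J e else 0) := by
      refine Finset.sum_congr rfl fun j hj => ?_
      rw [mem_Ico] at hj
      exact (if_congr (by simp [hj.1]) rfl rfl).symm
    rw [h2]
    refine (Finset.sum_subset ?_ ?_).symm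
    · intro x hx; rw [mem_Ico] at hx; rw [mem_range]; omega
    · intro x hx hnx
      rw [mem_range] at hx; rw [mem_Ico] at hnx
      exact if_neg (by omega)
  rw [step2, Finset.sum_Ico_eq_sum_range]
  unfold cc
  rw [Nat.cast_sum, Finset.mul_sum]
  refine Finset.sum_congr rfl fun i hi => ?_
  rw [mem_range] at hi
  have h1 : e + i - e = i := by omega
  rw [h1]
  have hc : (τ i ≠ τ (e + i)) ↔ ¬ (i ∈ A ↔ i + e ∈ A) := by
    rw [hA i (by omega), hA (i+e) (by omega)]
    have hx := hval i (by omega)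
    have hy := hval (i+e) (by omega)
    rw [show e + i = i + e by omega]
    rcases hx with hx | hx <;> rcases hy with hy | hy <;> rw [hx, hy] <;> norm_num
  rw [show e + i = i + e by omega] at hc ⊢
  by_cases hcc : τ i ≠ τ (i + e)
  · rw [if_pos hcc, if_pos (hc.mp hcc)]
    norm_num
  · rw [if_neg hcc, if_neg (fun h => hcc (hc.mpr h))]
    norm_num



def tL (k : ℕ) : ℕ → ℝ := fun n => if n < k then 1 else -1

lemma tL_ne_iff (k a b : ℕ) : tL k a ≠ tL k b ↔ ¬ (a < k ↔ b < k) := by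
  by_cases h1 : a < k <;> by_cases h2 : b < k <;> simp [tL, h1, h2] <;> norm_num

lemma g_L (N k : ℕ) (J : ℕ → ℝ) :
    ∑ j ∈ range N, ∑ i ∈ range j, (if tL k i ≠ tL k j then J (j - i) else 0)
      = ∑ i ∈ range k, ∑ j ∈ Ico k N, J (j - i) := by
  have step1 : ∀ j ∈ range N, ∑ i ∈ range j, (if tL k i ≠ tL k j then J (j - i) else 0)
      = if k ≤ j then ∑ i ∈ range k, J (j - i) else 0 := by
    intro j _
    by_cases hkj : k ≤ j
    · rw [if_pos hkj]
      have h1 : ∑ i ∈ range j, (if tL k i ≠ tL k j then J (j - i) else 0)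
          = ∑ i ∈ range j, (if i < k then J (j - i) else 0) := by
        refine Finset.sum_congr rfl fun i hi => ?_
        rw [mem_range] at hi
        refine if_congr ?_ rfl rfl
        rw [tL_ne_iff]
        omega
      rw [h1, ← Finset.sum_subset (Finset.range_subset_range.mpr hkj)
        (fun x _ hnx => if_neg (by rw [mem_range] at hnx; omega))]
      exact Finset.sum_congr rfl fun i hi => if_pos (mem_range.mp hi)
    · rw [if_neg hkj]
      refine Finset.sum_eq_zero fun i hi => ?_
      rw [mem_range] at hi
      refine if_neg ?_
      rw [tL_ne_iff]
      omega
  rw [Finset.sum_congr rfl step1, ← Finset.sum_filter]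
  have h2 : (range N).filter (fun j => k ≤ j) = Ico k N := by
    ext x; simp only [mem_filter, mem_range, mem_Ico]; omega
  rw [h2, Finset.sum_comm]

lemma dist_rev {N : ℕ} (i j : Fin N) :
    Nat.dist ((Fin.rev i : Fin N) : ℕ) ((Fin.rev j : Fin N) : ℕ) = Nat.dist (i:ℕ) (j:ℕ) := by
  have hi := i.isLt
  have hj := j.isLt
  simp only [Fin.val_rev, Nat.dist]
  omega

lemma T_rev (N : ℕ) (J : ℕ → ℝ) (σ : Fin N → ℝ) :
    (∑ i : Fin N, ∑ j : Fin N,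
        (if i ≠ j ∧ σ (Fin.rev i) ≠ σ (Fin.rev j) then J (Nat.dist (i:ℕ) (j:ℕ)) else 0))
      = ∑ i : Fin N, ∑ j : Fin N,
          (if i ≠ j ∧ σ i ≠ σ j then J (Nat.dist (i:ℕ) (j:ℕ)) else 0) := by
  rw [← Equiv.sum_comp (Fin.revPerm (n := N))
      (fun i => ∑ j : Fin N, (if i ≠ j ∧ σ i ≠ σ j then J (Nat.dist (i:ℕ) (j:ℕ)) else 0))]
  refine Finset.sum_congr rfl fun i _ => ?_
  rw [← Equiv.sum_comp (Fin.revPerm (n := N))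
      (fun j => (if Fin.revPerm i ≠ j ∧ σ (Fin.revPerm i) ≠ σ j
        then J (Nat.dist ((Fin.revPerm i : Fin N):ℕ) (j:ℕ)) else 0))]
  refine Finset.sum_congr rfl fun j _ => ?_
  simp only [Fin.revPerm_apply]
  rw [dist_rev]
  exact if_congr (and_congr_left' (not_congr Fin.rev_inj.symm)) rfl rfl

lemma one_interface (N k : ℕ) (A : Finset ℕ) (hsub : A ⊆ range N) (hcard : A.card = k)
    (h1 : ((range (N-1)).filter fun i => ¬ (i ∈ A ↔ i + 1 ∈ A)).card = 1) :
    A = range k ∨ A = Ico (N - k) N := by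
  classical
  obtain ⟨i₀, hi₀⟩ := Finset.card_eq_one.mp h1
  have hmem : ∀ i, i < N - 1 → ((¬ (i ∈ A ↔ i + 1 ∈ A)) ↔ i = i₀) := by
    intro i hi
    constructor
    · intro hP
      have hin : i ∈ (range (N-1)).filter fun i => ¬ (i ∈ A ↔ i + 1 ∈ A) := by
        rw [mem_filter, mem_range]; exact ⟨hi, hP⟩
      rw [hi₀, mem_singleton] at hin; exact hin
    · intro h; subst h
      have hin : i ∈ ({i} : Finset ℕ) := mem_singleton_self _
      rw [← hi₀, mem_filter] at hin
      exact hin.2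
  have hi₀lt : i₀ < N - 1 := by
    have hin : i₀ ∈ ({i₀} : Finset ℕ) := mem_singleton_self _
    rw [← hi₀, mem_filter, mem_range] at hin
    exact hin.1
  have hcross : ¬ (i₀ ∈ A ↔ i₀ + 1 ∈ A) := (hmem i₀ hi₀lt).mpr rfl
  have hlow : ∀ j, j ≤ i₀ → (j ∈ A ↔ 0 ∈ A) := by
    intro j
    induction j with
    | zero => exact fun _ => Iff.rfl
    | succ j ihj =>
      intro hj
      have h2 := ihj (by omega)
      have h4 : (j ∈ A ↔ j + 1 ∈ A) := by
        by_contra hne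
        have := (hmem j (by omega)).mp hne
        omega
      rw [← h4]; exact h2
  have hhigh : ∀ j, i₀ + 1 ≤ j → j < N → (j ∈ A ↔ i₀ + 1 ∈ A) := by
    intro j hj1
    induction j, hj1 using Nat.le_induction with
    | base => exact fun _ => Iff.rfl
    | succ j hj ihj =>
      intro hj2
      have h2 := ihj (by omega)
      have h4 : (j ∈ A ↔ j + 1 ∈ A) := by
        by_contra hne
        have := (hmem j (by omega)).mp hne
        omega
      rw [← h4]; exact h2
  by_cases h0 : 0 ∈ A
  · have hA : A = range (i₀ + 1) := by
      ext x
      rw [mem_range]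
      constructor
      · intro hx
        by_contra hgt
        push_neg at hgt
        have hxN : x < N := mem_range.mp (hsub hx)
        have hi1 : i₀ + 1 ∈ A := (hhigh x hgt hxN).mp hx
        have hi₀A : i₀ ∈ A := (hlow i₀ le_rfl).mpr h0
        exact hcross ⟨fun _ => hi1, fun _ => hi₀A⟩
      · intro hx
        exact (hlow x (by omega)).mpr h0
    left
    have hk : k = i₀ + 1 := by rw [← hcard, hA, card_range]
    rw [hk, hA]
  · have hA : A = Ico (i₀ + 1) N := by
      ext x
      rw [mem_Ico]
      constructor
      · intro hx
        have hxN : x < N := mem_range.mp (hsub hx)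
        refine ⟨?_, hxN⟩
        by_contra hle
        push_neg at hle
        exact h0 ((hlow x (by omega)).mp hx)
      · rintro ⟨hx1, hx2⟩
        have hi₀A : i₀ ∉ A := fun h => h0 ((hlow i₀ le_rfl).mp h)
        have hi₀1A : i₀ + 1 ∈ A := by tauto
        exact (hhigh x hx1 hx2).mpr hi₀1A
    right
    have hk : k = N - (i₀ + 1) := by rw [← hcard, hA, Nat.card_Ico]
    have hNk : N - k = i₀ + 1 := by omega
    rw [hNk, hA]











lemma T_to_g (N : ℕ) (J : ℕ → ℝ) (σ : Fin N → ℝ) (τ : ℕ → ℝ)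
    (hτ : ∀ i : Fin N, τ (i:ℕ) = σ i) :
    (∑ i : Fin N, ∑ j : Fin N, if i ≠ j ∧ σ i ≠ σ j then J (Nat.dist (i : ℕ) (j : ℕ)) else 0)
      = 2 * ∑ j ∈ range N, ∑ i ∈ range j, (if τ i ≠ τ j then J (j - i) else 0) := by
  rw [T_eq_double N J σ τ hτ]
  have hsym : ∀ i j, (if i ≠ j ∧ τ i ≠ τ j then J (Nat.dist i j) else 0)
      = (if j ≠ i ∧ τ j ≠ τ i then J (Nat.dist j i) else 0) := by
    intro i j
    rw [Nat.dist_comm]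
    exact if_congr (by tauto) rfl rfl
  have hdiag : ∀ i : ℕ, (if i ≠ i ∧ τ i ≠ τ i then J (Nat.dist i i) else 0) = 0 := by
    intro i; exact if_neg (by tauto)
  rw [double_sum_sym _ (fun i j => hsym i j) hdiag N]
  congr 1
  refine Finset.sum_congr rfl fun j _ => Finset.sum_congr rfl fun i hi => ?_
  rw [mem_range] at hi
  have hd : Nat.dist i j = j - i := by
    simp only [Nat.dist]
    omega
  rw [hd]
  exact if_congr ⟨fun h => h.2, fun h => ⟨by omega, h⟩⟩ rfl rfl

lemma main_bridge (N : ℕ) (J : ℕ → ℝ) (σ : Fin N → ℝ) (hσ : IsConfig σ) :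
    ∃ A : Finset ℕ, A ⊆ range N ∧ A.card = (Finset.univ.filter fun i => σ i = 1).card ∧
      (∀ i : Fin N, ((i:ℕ) ∈ A ↔ σ i = 1)) ∧
      (∑ i : Fin N, ∑ j : Fin N, if i ≠ j ∧ σ i ≠ σ j then J (Nat.dist (i : ℕ) (j : ℕ)) else 0)
        = 2 * ∑ e ∈ Icc 1 (N-1), J e * (cc A N e : ℝ) := by
  classical
  set τ : ℕ → ℝ := fun n => if h : n < N then σ ⟨n, h⟩ else 1 with hτdef
  have hτ : ∀ i : Fin N, τ (i:ℕ) = σ i := by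
    intro i
    simp only [hτdef]
    rw [dif_pos i.isLt]
  have hAmem : ∀ i : Fin N,
      ((i:ℕ) ∈ (Finset.univ.filter fun i => σ i = 1).image Fin.val ↔ σ i = 1) := by
    intro i
    constructor
    · intro hx
      obtain ⟨j, hj, hji⟩ := Finset.mem_image.mp hx
      have hj2 : j = i := Fin.val_injective hji
      subst hj2
      exact (Finset.mem_filter.mp hj).2
    · intro h
      exact Finset.mem_image.mpr ⟨i, Finset.mem_filter.mpr ⟨Finset.mem_univ i, h⟩, rfl⟩
  refine ⟨(Finset.univ.filter fun i => σ i = 1).image Fin.val, ?_, ?_, hAmem, ?_⟩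
  · intro x hx
    obtain ⟨j, _, rfl⟩ := Finset.mem_image.mp hx
    exact mem_range.mpr j.isLt
  · exact Finset.card_image_of_injective _ Fin.val_injective
  · rw [T_to_g N J σ τ hτ]
    congr 1
    apply g_eq_F
    · intro x hx
      have h1 : τ x = σ ⟨x, hx⟩ := by simp only [hτdef]; rw [dif_pos hx]
      rw [h1]
      exact hσ _
    · intro x hx
      have h1 : τ x = σ ⟨x, hx⟩ := by simp only [hτdef]; rw [dif_pos hx]
      rw [h1]
      exact hAmem ⟨x, hx⟩

lemma RHS_eq_F (N k : ℕ) (J : ℕ → ℝ) :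
    ∑ i ∈ range k, ∑ j ∈ Ico k N, J (j - i)
      = ∑ e ∈ Icc 1 (N-1), J e * (cc (range k) N e : ℝ) := by
  rw [← g_L N k J]
  apply g_eq_F
  · intro x _
    by_cases h : x < k
    · left; simp [tL, h]
    · right; simp [tL, h]
  · intro x _
    rw [mem_range]
    by_cases h : x < k
    · simp [tL, h]
    · simp only [tL, if_neg h]
      constructor
      · exact fun hh => absurd hh h
      · intro hh; norm_num at hh

lemma cc_range_one (N k : ℕ) (h0 : 0 < k) (hkN : k < N) :
    cc (range k) N 1 = 1 := by
  unfold cc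
  have h1 : ∀ i ∈ range (N-1), (if ¬ (i ∈ range k ↔ i + 1 ∈ range k) then (1:ℕ) else 0)
      = if i = k - 1 then 1 else 0 := by
    intro i _
    refine if_congr ?_ rfl rfl
    simp only [mem_range]
    omega
  rw [Finset.sum_congr rfl h1, Finset.sum_ite_eq' (range (N-1)) (k-1) (fun _ => 1)]
  rw [if_pos (mem_range.mpr (by omega))]

lemma T_of_L (N k : ℕ) (J : ℕ → ℝ) :
    (∑ i : Fin N, ∑ j : Fin N,
        if i ≠ j ∧ Lconf N k i ≠ Lconf N k j then J (Nat.dist (i:ℕ) (j:ℕ)) else 0)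
      = 2 * ∑ i ∈ range k, ∑ j ∈ Ico k N, J (j - i) := by
  rw [T_to_g N J (Lconf N k) (tL k) (fun i => rfl), g_L]

lemma T_of_R (N k : ℕ) (J : ℕ → ℝ) :
    (∑ i : Fin N, ∑ j : Fin N,
        if i ≠ j ∧ Rconf N k i ≠ Rconf N k j then J (Nat.dist (i:ℕ) (j:ℕ)) else 0)
      = 2 * ∑ i ∈ range k, ∑ j ∈ Ico k N, J (j - i) := by
  have hR : ∀ i : Fin N, Rconf N k i = Lconf N k (Fin.rev i) := by
    intro i
    have hi := i.isLt
    simp only [Rconf, Lconf, Fin.val_rev]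
    by_cases h : N - k ≤ (i:ℕ)
    · rw [if_pos h, if_pos (by omega)]
    · rw [if_neg h, if_neg (by omega)]
  have step : (∑ i : Fin N, ∑ j : Fin N,
      if i ≠ j ∧ Rconf N k i ≠ Rconf N k j then J (Nat.dist (i:ℕ) (j:ℕ)) else 0)
      = ∑ i : Fin N, ∑ j : Fin N,
        if i ≠ j ∧ Lconf N k (Fin.rev i) ≠ Lconf N k (Fin.rev j)
          then J (Nat.dist (i:ℕ) (j:ℕ)) else 0 := by
    refine Finset.sum_congr rfl fun i _ => Finset.sum_congr rfl fun j _ => ?_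
    rw [hR i, hR j]
  rw [step, T_rev N J (Lconf N k), T_of_L N k J]


end Prop41

open Prop41

/-- Proposition 4.1 (equality case): for a configuration with exactly `k` plus spins,
equality `∑_{i≠j} J(|i-j|) 𝟙[σᵢ ≠ σⱼ] = 2 ∑_{i=1}^{k} ∑_{j=k+1}^{N} J(|i-j|)` holds
iff `σ = L^(k)` or `σ = R^(k)`. -/
theorem disagreement_sum_eq_iff (N k : ℕ) (hN : 1 ≤ N) (hk : k ≤ N)
    (J : ℕ → ℝ) (hpos : ∀ n, 1 ≤ n → 0 < J n) (hdec : ∀ n, 1 ≤ n → J (n + 1) < J n)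
    (σ : Fin N → ℝ) (hσ : IsConfig σ)
    (hcard : (Finset.univ.filter fun i => σ i = 1).card = k) :
    (∑ i : Fin N, ∑ j : Fin N,
        if i ≠ j ∧ σ i ≠ σ j then J (Nat.dist (i : ℕ) (j : ℕ)) else 0) =
      2 * ∑ i ∈ Finset.range k, ∑ j ∈ Finset.Ico k N, J (j - i) ↔
      σ = Lconf N k ∨ σ = Rconf N k := by
  classical
  constructor
  · intro heq
    rcases Nat.eq_zero_or_pos k with hk0 | hkpos
    · subst hk0
      left
      funext i
      have hne : σ i ≠ 1 := by
        intro h1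
        have hin : i ∈ Finset.univ.filter (fun i => σ i = 1) :=
          mem_filter.mpr ⟨mem_univ i, h1⟩
        have := card_pos.mpr ⟨i, hin⟩
        omega
      have hm1 := (hσ i).resolve_left hne
      simp [Lconf, hm1]
    rcases eq_or_lt_of_le hk with hkN | hkN
    · subst hkN
      left
      funext i
      have huniv : (Finset.univ.filter fun i => σ i = 1) = Finset.univ := by
        apply Finset.eq_univ_of_card
        rw [hcard, Fintype.card_fin]
      have h1 : σ i = 1 := by
        have hin : i ∈ Finset.univ.filter (fun i => σ i = 1) := by
          rw [huniv]; exact mem_univ i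
        exact (mem_filter.mp hin).2
      simp [Lconf, i.isLt, h1]
    · obtain ⟨A, hAsub, hAcard, hAmem, hbridge⟩ := main_bridge N J σ hσ
      rw [hcard] at hAcard
      have hccA1 : cc A N 1 = 1 := by
        rcases eq_or_lt_of_le (show 2 ≤ N by omega) with hN2 | hN3
        · -- N = 2, k = 1
          have hN2' : N = 2 := hN2.symm
          subst hN2'
          have hk1 : k = 1 := by omega
          have hA1 : A.card = 1 := by omega
          obtain ⟨a, ha⟩ := Finset.card_eq_one.mp hA1
          have haN : a < 2 := by
            have := hAsub (ha ▸ mem_singleton_self a)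
            rwa [mem_range] at this
          subst ha
          rcases (by omega : a = 0 ∨ a = 1) with rfl | rfl <;> decide
        · -- N ≥ 3
          have hRHS := RHS_eq_F N k J
          have hFF : ∑ e ∈ Icc 1 (N-1), J e * (cc A N e : ℝ)
              = ∑ e ∈ Icc 1 (N-1), J e * (cc (range k) N e : ℝ) := by
            have h2 : (2:ℝ) * (∑ e ∈ Icc 1 (N-1), J e * (cc A N e : ℝ))
                = 2 * ∑ e ∈ Icc 1 (N-1), J e * (cc (range k) N e : ℝ) := by
              rw [← hbridge, heq, hRHS]
            linarith
          have hm : N - 2 + 1 = N - 1 := by omega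
          have habelA := abel J (fun e => (cc A N e : ℝ)) (N-2)
          have habelL := abel J (fun e => (cc (range k) N e : ℝ)) (N-2)
          rw [hm] at habelA habelL
          have hkey : ∀ d, (∑ e ∈ Icc 1 d, (cc (range k) N e : ℝ))
              ≤ ∑ e ∈ Icc 1 d, (cc A N e : ℝ) := by
            intro d
            have h := key N A k d hAsub hAcard
            unfold CC at h
            exact_mod_cast h
          have hterm : ∀ d ∈ Icc 1 (N-2), 0 ≤ (J d - J (d+1)) *
              ((∑ e ∈ Icc 1 d, (cc A N e : ℝ)) - ∑ e ∈ Icc 1 d, (cc (range k) N e : ℝ)) := by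
            intro d hd
            rw [mem_Icc] at hd
            have h1 := hdec d hd.1
            have h2 := hkey d
            exact mul_nonneg (by linarith) (by linarith)
          have hY : 0 ≤ J (N-1) *
              ((∑ e ∈ Icc 1 (N-1), (cc A N e : ℝ)) - ∑ e ∈ Icc 1 (N-1), (cc (range k) N e : ℝ)) :=
            mul_nonneg (le_of_lt (hpos (N-1) (by omega))) (by linarith [hkey (N-1)])
          have expand : ∑ d ∈ Icc 1 (N-2), (J d - J (d+1)) *
              ((∑ e ∈ Icc 1 d, (cc A N e : ℝ)) - ∑ e ∈ Icc 1 d, (cc (range k) N e : ℝ))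
              = (∑ d ∈ Icc 1 (N-2), (J d - J (d+1)) * (∑ e ∈ Icc 1 d, (cc A N e : ℝ)))
                - ∑ d ∈ Icc 1 (N-2), (J d - J (d+1)) * (∑ e ∈ Icc 1 d, (cc (range k) N e : ℝ)) := by
            rw [← Finset.sum_sub_distrib]
            exact Finset.sum_congr rfl fun d _ => by ring
          have hX0 : ∑ d ∈ Icc 1 (N-2), (J d - J (d+1)) *
              ((∑ e ∈ Icc 1 d, (cc A N e : ℝ)) - ∑ e ∈ Icc 1 d, (cc (range k) N e : ℝ)) = 0 := by
            have hsum := Finset.sum_nonneg hterm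
            have hzero : (∑ d ∈ Icc 1 (N-2), (J d - J (d+1)) *
                ((∑ e ∈ Icc 1 d, (cc A N e : ℝ)) - ∑ e ∈ Icc 1 d, (cc (range k) N e : ℝ)))
                + J (N-1) *
                ((∑ e ∈ Icc 1 (N-1), (cc A N e : ℝ)) - ∑ e ∈ Icc 1 (N-1), (cc (range k) N e : ℝ))
                = 0 := by
              rw [expand]
              have hA' : ∑ e ∈ Icc 1 (N-1), J e * (cc A N e : ℝ)
                  = ∑ d ∈ Icc 1 (N-2), (J d - J (d+1)) * (∑ e ∈ Icc 1 d, (cc A N e : ℝ))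
                    + J (N-1) * ∑ e ∈ Icc 1 (N-1), (cc A N e : ℝ) := habelA
              have hL' : ∑ e ∈ Icc 1 (N-1), J e * (cc (range k) N e : ℝ)
                  = ∑ d ∈ Icc 1 (N-2), (J d - J (d+1)) * (∑ e ∈ Icc 1 d, (cc (range k) N e : ℝ))
                    + J (N-1) * ∑ e ∈ Icc 1 (N-1), (cc (range k) N e : ℝ) := habelL
              rw [hFF] at hA'
              rw [hA'] at hL'
              ring_nf
              ring_nf at hL'
              linarith
            linarith
          have h1mem : (1:ℕ) ∈ Icc 1 (N-2) := by rw [mem_Icc]; omega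
          have hterm1 := (Finset.sum_eq_zero_iff_of_nonneg hterm).mp hX0 1 h1mem
          have hJ12 : 0 < J 1 - J 2 := by
            have := hdec 1 le_rfl
            norm_num at this ⊢
            linarith
          have hC1 : (∑ e ∈ Icc 1 1, (cc A N e : ℝ)) = ∑ e ∈ Icc 1 1, (cc (range k) N e : ℝ) := by
            rcases mul_eq_zero.mp hterm1 with h | h
            · exfalso; rw [show (1:ℕ)+1 = 2 from rfl] at h; linarith
            · linarith
          rw [Finset.Icc_self, Finset.sum_singleton, Finset.sum_singleton] at hC1
          have hcc : cc A N 1 = cc (range k) N 1 := by exact_mod_cast hC1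
          rw [hcc, cc_range_one N k hkpos hkN]
      have h1card : ((range (N-1)).filter fun i => ¬ (i ∈ A ↔ i + 1 ∈ A)).card = 1 := by
        rw [Finset.card_filter]
        exact hccA1
      rcases one_interface N k A hAsub hAcard h1card with hA | hA
      · left
        funext i
        by_cases h : (i:ℕ) < k
        · have h1 : σ i = 1 := (hAmem i).mp (hA ▸ mem_range.mpr h)
          simp [Lconf, h, h1]
        · have hni : (i:ℕ) ∉ A := by rw [hA, mem_range]; exact h
          have h1 : σ i = -1 := (hσ i).resolve_left (fun hh => hni ((hAmem i).mpr hh))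
          simp [Lconf, h, h1]
      · right
        funext i
        by_cases h : N - k ≤ (i:ℕ)
        · have hmA : (i:ℕ) ∈ A := by rw [hA, mem_Ico]; exact ⟨h, i.isLt⟩
          have h1 : σ i = 1 := (hAmem i).mp hmA
          simp [Rconf, h, h1]
        · have hni : (i:ℕ) ∉ A := by rw [hA, mem_Ico]; omega
          have h1 : σ i = -1 := (hσ i).resolve_left (fun hh => hni ((hAmem i).mpr hh))
          simp [Rconf, h, h1]
  · intro hLR
    rcases hLR with rfl | rfl
    · exact T_of_L N k J
    · exact T_of_R N k J
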